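/- Let f : ℝ → ℝ be a convex function, let A_1, …, A_m be n×n Hermitian complex matrices, and let Z_1, …, Z_m be n×n complex matrices with ∑_{i=1}^m Z_iᴴ Z_i = I. Then for every j ≥ 1 with 2j−1 ≤ n, λ_{2j-1}(f(∑_i Z_iᴴ A_i Z_i)) ≤ λ_j(∑_i Z_iᴴ f(A_i) Z_i), where λ_j(·) denotes the j-th largest eigenvalue counted with multiplicity. -/

import Mathlib

open Matrix

/-- The `j`-th largest eigenvalue of a Hermitian matrix (`0`-indexed, so `eigDesc hA ⟨0, _⟩`
is the largest), counted with multiplicity. -/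
noncomputable def eigDesc {n : ℕ} {A : Matrix (Fin n) (Fin n) ℂ} (hA : A.IsHermitian)
    (j : Fin n) : ℝ :=
  hA.eigenvalues (Tuple.sort hA.eigenvalues j.rev)

/-- Applying a real function to a Hermitian matrix via the functional calculus yields a
Hermitian matrix. -/
lemma isHermitian_cfc {n : ℕ} {A : Matrix (Fin n) (Fin n) ℂ} (hA : A.IsHermitian)
    (f : ℝ → ℝ) : (hA.cfc f).IsHermitian := by
  rw [← hA.cfc_eq]
  exact cfc_predicate f A

lemma isHermitian_half_smul {n : ℕ} {X : Matrix (Fin n) (Fin n) ℂ} (hX : X.IsHermitian) :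
    ((2 : ℝ)⁻¹ • X).IsHermitian := by
  show _ = _
  rw [Matrix.conjTranspose_smul, star_trivial, hX.eq]

lemma isHermitian_sum_conj {m n : ℕ} {A : Fin m → Matrix (Fin n) (Fin n) ℂ}
    (Z : Fin m → Matrix (Fin n) (Fin n) ℂ) (hA : ∀ i, (A i).IsHermitian) :
    (∑ i, (Z i)ᴴ * A i * Z i).IsHermitian := by
  show _ = _
  rw [Matrix.conjTranspose_sum]
  exact Finset.sum_congr rfl fun i _ => (isHermitian_conjTranspose_mul_mul (Z i) (hA i)).eq


section AuxProof

open Module Finset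
open scoped InnerProductSpace

variable {n : ℕ} {X : Matrix (Fin n) (Fin n) ℂ}

lemma cfc_mulVec_basis (hX : X.IsHermitian) (g : ℝ → ℝ) (j : Fin n) :
    hX.cfc g *ᵥ ⇑(hX.eigenvectorBasis j) =
      ((g (hX.eigenvalues j) : ℝ) : ℂ) • ⇑(hX.eigenvectorBasis j) := by
  rw [Matrix.IsHermitian.cfc, Unitary.conjStarAlgAut_apply, ← mulVec_mulVec, ← mulVec_mulVec,
    hX.star_eigenvectorUnitary_mulVec, diagonal_mulVec_single]
  rw [← hX.eigenvectorUnitary_mulVec]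
  ext i
  simp [mulVec, dotProduct, Pi.single_apply, hX.eigenvectorUnitary_apply, mul_comm]

lemma cfc_id_eq (hX : X.IsHermitian) : hX.cfc (fun t => t) = X := by
  rw [Matrix.IsHermitian.cfc]
  exact hX.spectral_theorem.symm

lemma quadform_cfc (hX : X.IsHermitian) (g : ℝ → ℝ) (y : EuclideanSpace ℂ (Fin n)) :
    ⟪y, toEuclideanLin (hX.cfc g) y⟫_ℂ =
      ((∑ i, g (hX.eigenvalues i) * ‖hX.eigenvectorBasis.repr y i‖ ^ 2 : ℝ) : ℂ) := by
  set B := hX.eigenvectorBasis with hB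
  have hL : ∀ j : Fin n, toEuclideanLin (hX.cfc g) (B j)
      = ((g (hX.eigenvalues j) : ℝ) : ℂ) • (B j) := by
    intro j
    apply (WithLp.equiv 2 ((Fin n) → ℂ)).injective
    show (hX.cfc g) *ᵥ (B j).ofLp = _
    have := cfc_mulVec_basis hX g j
    rw [this]
    rfl
  have hLy : toEuclideanLin (hX.cfc g) y
      = ∑ j, (B.repr y j * ((g (hX.eigenvalues j) : ℝ) : ℂ)) • B j := by
    conv_lhs => rw [← B.sum_repr y]
    rw [map_sum]
    simp_rw [_root_.map_smul, hL, smul_smul]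
  rw [hLy, inner_sum]
  simp_rw [inner_smul_right]
  push_cast
  congr 1
  ext j
  have h2 : ⟪y, (B j : EuclideanSpace ℂ (Fin n))⟫_ℂ = (starRingEnd ℂ) (B.repr y j) := by
    rw [← inner_conj_symm, B.repr_apply_apply]
  rw [h2, mul_comm (B.repr y j) _, mul_assoc, RCLike.mul_conj]
  push_cast
  rfl

lemma re_quadform_cfc (hX : X.IsHermitian) (g : ℝ → ℝ) (y : EuclideanSpace ℂ (Fin n)) :
    Complex.re ⟪y, toEuclideanLin (hX.cfc g) y⟫_ℂ =
      ∑ i, g (hX.eigenvalues i) * ‖hX.eigenvectorBasis.repr y i‖ ^ 2 := by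
  rw [quadform_cfc]
  exact Complex.ofReal_re _

lemma re_quadform_self (hX : X.IsHermitian) (y : EuclideanSpace ℂ (Fin n)) :
    Complex.re ⟪y, toEuclideanLin X y⟫_ℂ =
      ∑ i, hX.eigenvalues i * ‖hX.eigenvectorBasis.repr y i‖ ^ 2 := by
  conv_lhs => rw [← cfc_id_eq hX]
  exact re_quadform_cfc hX (fun t => t) y

lemma sum_sq_repr (B : OrthonormalBasis (Fin n) ℂ (EuclideanSpace ℂ (Fin n)))
    (y : EuclideanSpace ℂ (Fin n)) : ∑ i, ‖B.repr y i‖ ^ 2 = ‖y‖ ^ 2 := by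
  have h1 : ‖B.repr y‖ = ‖y‖ := B.repr.norm_map y
  rw [← h1, EuclideanSpace.norm_eq, Real.sq_sqrt]
  exact Finset.sum_nonneg fun i _ => sq_nonneg _

lemma repr_eq_zero_of_mem_span (B : OrthonormalBasis (Fin n) ℂ (EuclideanSpace ℂ (Fin n)))
    (I : Finset (Fin n)) {x : EuclideanSpace ℂ (Fin n)}
    (hx : x ∈ Submodule.span ℂ (⇑B '' ↑I)) {i : Fin n} (hi : i ∉ I) : B.repr x i = 0 := by
  induction hx using Submodule.span_induction with
  | mem z hz =>
    obtain ⟨j, hj, rfl⟩ := hz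
    rw [B.repr_apply_apply, B.orthonormal.2 (by rintro rfl; exact hi hj)]
  | zero => simp
  | add a b _ _ ha hb => rw [map_add]; simp [ha, hb]
  | smul c a _ ha => rw [_root_.map_smul]; simp [ha]

lemma finrank_span_image (B : OrthonormalBasis (Fin n) ℂ (EuclideanSpace ℂ (Fin n)))
    (I : Finset (Fin n)) :
    finrank ℂ (Submodule.span ℂ (⇑B '' ↑I)) = I.card := by
  have h1 : ⇑B '' ↑I = Set.range (⇑B ∘ (Subtype.val : {i // i ∈ I} → Fin n)) := by
    rw [Set.range_comp]
    ext i
    simp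
  have h2 : LinearIndependent ℂ (⇑B ∘ (Subtype.val : {i // i ∈ I} → Fin n)) :=
    B.orthonormal.linearIndependent.comp _ Subtype.val_injective
  rw [h1, finrank_span_eq_card h2, Fintype.card_coe]

lemma exists_ne_zero_mem_inf (S T : Submodule ℂ (EuclideanSpace ℂ (Fin n)))
    (h : n < finrank ℂ S + finrank ℂ T) :
    ∃ x, x ∈ S ∧ x ∈ T ∧ x ≠ 0 := by
  have h1 := Submodule.finrank_sup_add_finrank_inf_eq S T
  have h2 : finrank ℂ ↥(S ⊔ T) ≤ n := by
    simpa [finrank_euclideanSpace_fin] using Submodule.finrank_le (S ⊔ T)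
  have h3 : (S ⊓ T) ≠ ⊥ := by
    intro hb
    rw [hb, finrank_bot] at h1
    omega
  obtain ⟨x, hx, hx0⟩ := Submodule.exists_mem_ne_zero_of_ne_bot h3
  exact ⟨x, hx.1, hx.2, hx0⟩

lemma re_quad_cfc_le (hX : X.IsHermitian) (g : ℝ → ℝ) (I : Finset (Fin n)) {μ : ℝ}
    (hμ : ∀ i ∈ I, g (hX.eigenvalues i) ≤ μ) {x : EuclideanSpace ℂ (Fin n)}
    (hx : x ∈ Submodule.span ℂ (⇑hX.eigenvectorBasis '' ↑I)) :
    Complex.re ⟪x, toEuclideanLin (hX.cfc g) x⟫_ℂ ≤ μ * ‖x‖ ^ 2 := by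
  rw [re_quadform_cfc]
  have h0 : ∀ i ∈ Finset.univ, i ∉ I → g (hX.eigenvalues i) * ‖hX.eigenvectorBasis.repr x i‖ ^ 2 = 0 :=
    fun i _ hi => by rw [repr_eq_zero_of_mem_span _ I hx hi]; simp
  rw [← Finset.sum_subset (Finset.subset_univ I) h0]
  have h1 : ∀ i ∈ Finset.univ, i ∉ I → μ * ‖hX.eigenvectorBasis.repr x i‖ ^ 2 = 0 :=
    fun i _ hi => by rw [repr_eq_zero_of_mem_span _ I hx hi]; simp
  calc ∑ i ∈ I, g (hX.eigenvalues i) * ‖hX.eigenvectorBasis.repr x i‖ ^ 2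
      ≤ ∑ i ∈ I, μ * ‖hX.eigenvectorBasis.repr x i‖ ^ 2 :=
        Finset.sum_le_sum fun i hi => mul_le_mul_of_nonneg_right (hμ i hi) (sq_nonneg _)
    _ = ∑ i, μ * ‖hX.eigenvectorBasis.repr x i‖ ^ 2 := Finset.sum_subset (Finset.subset_univ I) h1
    _ = μ * ‖x‖ ^ 2 := by rw [← Finset.mul_sum, sum_sq_repr]

lemma re_quad_cfc_ge (hX : X.IsHermitian) (g : ℝ → ℝ) (I : Finset (Fin n)) {b : ℝ}
    (hb : ∀ i ∈ I, b ≤ g (hX.eigenvalues i)) {x : EuclideanSpace ℂ (Fin n)}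
    (hx : x ∈ Submodule.span ℂ (⇑hX.eigenvectorBasis '' ↑I)) :
    b * ‖x‖ ^ 2 ≤ Complex.re ⟪x, toEuclideanLin (hX.cfc g) x⟫_ℂ := by
  rw [re_quadform_cfc]
  have h0 : ∀ i ∈ Finset.univ, i ∉ I → g (hX.eigenvalues i) * ‖hX.eigenvectorBasis.repr x i‖ ^ 2 = 0 :=
    fun i _ hi => by rw [repr_eq_zero_of_mem_span _ I hx hi]; simp
  rw [← Finset.sum_subset (Finset.subset_univ I) h0]
  have h1 : ∀ i ∈ Finset.univ, i ∉ I → b * ‖hX.eigenvectorBasis.repr x i‖ ^ 2 = 0 :=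
    fun i _ hi => by rw [repr_eq_zero_of_mem_span _ I hx hi]; simp
  calc b * ‖x‖ ^ 2 = ∑ i, b * ‖hX.eigenvectorBasis.repr x i‖ ^ 2 := by
        rw [← Finset.mul_sum, sum_sq_repr]
    _ = ∑ i ∈ I, b * ‖hX.eigenvectorBasis.repr x i‖ ^ 2 :=
        (Finset.sum_subset (Finset.subset_univ I) h1).symm
    _ ≤ _ := Finset.sum_le_sum fun i hi => mul_le_mul_of_nonneg_right (hb i hi) (sq_nonneg _)

lemma eigDesc_le_of_subspace {k : ℕ} (hX : X.IsHermitian) (hk : k < n) {μ : ℝ}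
    (S : Submodule ℂ (EuclideanSpace ℂ (Fin n))) (hdim : n - k ≤ finrank ℂ S)
    (hq : ∀ x ∈ S, Complex.re ⟪x, toEuclideanLin X x⟫_ℂ ≤ μ * ‖x‖ ^ 2) :
    eigDesc hX ⟨k, hk⟩ ≤ μ := by
  set σ := Tuple.sort hX.eigenvalues with hσ
  set I : Finset (Fin n) := Finset.image σ (Finset.Ici ((⟨k, hk⟩ : Fin n).rev)) with hI
  have hIcard : I.card = k + 1 := by
    rw [hI, Finset.card_image_of_injective _ σ.injective, Fin.card_Ici]
    simp [Fin.rev]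
    omega
  have hT := finrank_span_image hX.eigenvectorBasis I
  obtain ⟨x, hxS, hxT, hx0⟩ := exists_ne_zero_mem_inf S _ (by rw [hT, hIcard]; omega)
  have hge : eigDesc hX ⟨k, hk⟩ * ‖x‖ ^ 2 ≤ Complex.re ⟪x, toEuclideanLin X x⟫_ℂ := by
    have hb : ∀ i ∈ I, eigDesc hX ⟨k, hk⟩ ≤ (fun t => t) (hX.eigenvalues i) := by
      intro i hi
      obtain ⟨m, hm, rfl⟩ := Finset.mem_image.mp hi
      exact Tuple.monotone_sort hX.eigenvalues (Finset.mem_Ici.mp hm)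
    have := re_quad_cfc_ge hX (fun t => t) I hb hxT
    rwa [cfc_id_eq] at this
  have hpos : (0:ℝ) < ‖x‖ ^ 2 := pow_pos (norm_pos_iff.mpr hx0) 2
  have hle := hq x hxS
  nlinarith

lemma card_le_of_high {C : Matrix (Fin n) (Fin n) ℂ} (hC : C.IsHermitian)
    (S : Submodule ℂ (EuclideanSpace ℂ (Fin n))) (K : Set ℝ)
    (hK : ∀ x ∈ S, x ≠ 0 → Complex.re ⟪x, toEuclideanLin C x⟫_ℂ / ‖x‖ ^ 2 ∈ K)
    (I : Finset (Fin n)) (hI : ∀ i ∈ I, ∀ t ∈ K, t < hC.eigenvalues i) :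
    I.card + finrank ℂ S ≤ n := by
  by_contra hcon
  push_neg at hcon
  have hT := finrank_span_image hC.eigenvectorBasis I
  obtain ⟨x, hxS, hxT, hx0⟩ := exists_ne_zero_mem_inf S _ (by rw [hT]; omega)
  have hIne : I.Nonempty := by
    rw [← Finset.card_pos]
    have : finrank ℂ S ≤ n := by
      simpa [finrank_euclideanSpace_fin] using Submodule.finrank_le S
    omega
  obtain ⟨i₀, hi₀, hmin⟩ := Finset.exists_min_image I hC.eigenvalues hIne
  have hge : hC.eigenvalues i₀ * ‖x‖ ^ 2 ≤ Complex.re ⟪x, toEuclideanLin C x⟫_ℂ := by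
    have := re_quad_cfc_ge hC (fun t => t) I (fun i hi => hmin i hi) hxT
    rwa [cfc_id_eq] at this
  have hpos : (0:ℝ) < ‖x‖ ^ 2 := pow_pos (norm_pos_iff.mpr hx0) 2
  have hlt := hI i₀ hi₀ _ (hK x hxS hx0)
  exact absurd ((le_div_iff₀ hpos).mpr hge) (not_le.mpr hlt)

lemma card_le_of_low {C : Matrix (Fin n) (Fin n) ℂ} (hC : C.IsHermitian)
    (S : Submodule ℂ (EuclideanSpace ℂ (Fin n))) (K : Set ℝ)
    (hK : ∀ x ∈ S, x ≠ 0 → Complex.re ⟪x, toEuclideanLin C x⟫_ℂ / ‖x‖ ^ 2 ∈ K)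
    (I : Finset (Fin n)) (hI : ∀ i ∈ I, ∀ t ∈ K, hC.eigenvalues i < t) :
    I.card + finrank ℂ S ≤ n := by
  by_contra hcon
  push_neg at hcon
  have hT := finrank_span_image hC.eigenvectorBasis I
  obtain ⟨x, hxS, hxT, hx0⟩ := exists_ne_zero_mem_inf S _ (by rw [hT]; omega)
  have hIne : I.Nonempty := by
    rw [← Finset.card_pos]
    have : finrank ℂ S ≤ n := by
      simpa [finrank_euclideanSpace_fin] using Submodule.finrank_le S
    omega
  obtain ⟨i₀, hi₀, hmax⟩ := Finset.exists_max_image I hC.eigenvalues hIne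
  have hle : Complex.re ⟪x, toEuclideanLin C x⟫_ℂ ≤ hC.eigenvalues i₀ * ‖x‖ ^ 2 := by
    have := re_quad_cfc_le hC (fun t => t) I (fun i hi => hmax i hi) hxT
    rwa [cfc_id_eq] at this
  have hpos : (0:ℝ) < ‖x‖ ^ 2 := pow_pos (norm_pos_iff.mpr hx0) 2
  have hlt := hI i₀ hi₀ _ (hK x hxS hx0)
  exact absurd ((div_le_iff₀ hpos).mpr hle) (not_le.mpr hlt)

lemma toEuclideanLin_mul_apply (P Q : Matrix (Fin n) (Fin n) ℂ) (x : EuclideanSpace ℂ (Fin n)) :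
    toEuclideanLin (P * Q) x = toEuclideanLin P (toEuclideanLin Q x) := by
  simp only [toEuclideanLin_apply, ← mulVec_mulVec, Equiv.apply_symm_apply]

lemma inner_conjTranspose_mul (Zm M : Matrix (Fin n) (Fin n) ℂ) (x : EuclideanSpace ℂ (Fin n)) :
    ⟪x, toEuclideanLin (Zmᴴ * M * Zm) x⟫_ℂ
      = ⟪toEuclideanLin Zm x, toEuclideanLin M (toEuclideanLin Zm x)⟫_ℂ := by
  rw [toEuclideanLin_mul_apply, toEuclideanLin_mul_apply,
    Matrix.toEuclideanLin_conjTranspose_eq_adjoint, LinearMap.adjoint_inner_right]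

lemma jensen_single {A : Matrix (Fin n) (Fin n) ℂ} (hA : A.IsHermitian) {f : ℝ → ℝ}
    (hf : ConvexOn ℝ Set.univ f) (y : EuclideanSpace ℂ (Fin n)) (hy : y ≠ 0) :
    ‖y‖ ^ 2 * f (Complex.re ⟪y, toEuclideanLin A y⟫_ℂ / ‖y‖ ^ 2) ≤
      Complex.re ⟪y, toEuclideanLin (hA.cfc f) y⟫_ℂ := by
  have hw : (0:ℝ) < ‖y‖ ^ 2 := pow_pos (norm_pos_iff.mpr hy) 2
  set w : Fin n → ℝ := fun i => ‖hA.eigenvectorBasis.repr y i‖ ^ 2 / ‖y‖ ^ 2 with hwdef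
  have h0 : ∀ i ∈ Finset.univ, (0:ℝ) ≤ w i := fun i _ => div_nonneg (sq_nonneg _) hw.le
  have h1 : ∑ i, w i = 1 := by
    rw [hwdef, ← Finset.sum_div, sum_sq_repr, div_self hw.ne']
  have hj := hf.map_sum_le h0 h1 (fun i _ => Set.mem_univ (hA.eigenvalues i))
  have h2 : ∑ i, w i • hA.eigenvalues i = Complex.re ⟪y, toEuclideanLin A y⟫_ℂ / ‖y‖ ^ 2 := by
    rw [re_quadform_self hA, Finset.sum_div]
    refine Finset.sum_congr rfl fun i _ => ?_
    rw [smul_eq_mul, hwdef]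
    ring
  rw [h2] at hj
  calc ‖y‖ ^ 2 * f (Complex.re ⟪y, toEuclideanLin A y⟫_ℂ / ‖y‖ ^ 2)
      ≤ ‖y‖ ^ 2 * ∑ i, w i * f (hA.eigenvalues i) := mul_le_mul_of_nonneg_left hj hw.le
    _ = Complex.re ⟪y, toEuclideanLin (hA.cfc f) y⟫_ℂ := by
        rw [re_quadform_cfc, Finset.mul_sum]
        refine Finset.sum_congr rfl fun i _ => ?_
        rw [hwdef]
        field_simp

lemma toEuclideanLin_sum_apply {m : ℕ} (M : Fin m → Matrix (Fin n) (Fin n) ℂ)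
    (x : EuclideanSpace ℂ (Fin n)) :
    toEuclideanLin (∑ i, M i) x = ∑ i, toEuclideanLin (M i) x := by
  rw [map_sum, LinearMap.sum_apply]

lemma toEuclideanLin_one_apply (x : EuclideanSpace ℂ (Fin n)) :
    toEuclideanLin (1 : Matrix (Fin n) (Fin n) ℂ) x = x := by
  rw [toEuclideanLin_apply, one_mulVec]

lemma jensen_quad {m : ℕ} {f : ℝ → ℝ} (hf : ConvexOn ℝ Set.univ f)
    {A : Fin m → Matrix (Fin n) (Fin n) ℂ} (hA : ∀ i, (A i).IsHermitian)
    (Z : Fin m → Matrix (Fin n) (Fin n) ℂ) (hZ : ∑ i, (Z i)ᴴ * Z i = 1)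
    (x : EuclideanSpace ℂ (Fin n)) (hx : ‖x‖ = 1) :
    f (Complex.re ⟪x, toEuclideanLin (∑ i, (Z i)ᴴ * A i * Z i) x⟫_ℂ) ≤
      Complex.re ⟪x, toEuclideanLin (∑ i, (Z i)ᴴ * (hA i).cfc f * Z i) x⟫_ℂ := by
  set y : Fin m → EuclideanSpace ℂ (Fin n) := fun i => toEuclideanLin (Z i) x with hy
  set w : Fin m → ℝ := fun i => ‖y i‖ ^ 2 with hw
  have h0 : ∀ i ∈ Finset.univ, (0:ℝ) ≤ w i := fun i _ => sq_nonneg _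
  have hy0 : ∀ i, w i = 0 → y i = 0 := by
    intro i hi
    rw [hw] at hi
    exact norm_eq_zero.mp (pow_eq_zero_iff two_ne_zero |>.mp hi)
  have hinner : ∀ i, w i = Complex.re ⟪x, toEuclideanLin ((Z i)ᴴ * Z i) x⟫_ℂ := by
    intro i
    rw [toEuclideanLin_mul_apply, Matrix.toEuclideanLin_conjTranspose_eq_adjoint,
      LinearMap.adjoint_inner_right]
    exact (inner_self_eq_norm_sq (𝕜 := ℂ) (y i)).symm
  have hsum : ∑ i, w i = 1 := by
    calc ∑ i, w i = ∑ i, Complex.re ⟪x, toEuclideanLin ((Z i)ᴴ * Z i) x⟫_ℂ :=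
          Finset.sum_congr rfl fun i _ => hinner i
      _ = Complex.re ⟪x, toEuclideanLin (∑ i, (Z i)ᴴ * Z i) x⟫_ℂ := by
          rw [toEuclideanLin_sum_apply, inner_sum, Complex.re_sum]
      _ = 1 := by
          rw [hZ, toEuclideanLin_one_apply]
          have h := inner_self_eq_norm_sq (𝕜 := ℂ) x
          rw [hx, one_pow] at h
          exact h
  set s : Fin m → ℝ := fun i =>
    if w i = 0 then 0 else Complex.re ⟪y i, toEuclideanLin (A i) (y i)⟫_ℂ / w i with hs
  have hws : ∀ i, w i • s i = Complex.re ⟪y i, toEuclideanLin (A i) (y i)⟫_ℂ := by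
    intro i
    by_cases hwi : w i = 0
    · simp only [hs, if_pos hwi, smul_zero, hy0 i hwi]
      simp
    · simp only [hs, if_neg hwi, smul_eq_mul]
      exact mul_div_cancel₀ _ hwi
  have hC : Complex.re ⟪x, toEuclideanLin (∑ i, (Z i)ᴴ * A i * Z i) x⟫_ℂ = ∑ i, w i • s i := by
    rw [toEuclideanLin_sum_apply, inner_sum, Complex.re_sum]
    exact Finset.sum_congr rfl fun i _ => by
      rw [inner_conjTranspose_mul]
      exact (hws i).symm
  have hD : ∑ i, Complex.re ⟪y i, toEuclideanLin ((hA i).cfc f) (y i)⟫_ℂ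
      = Complex.re ⟪x, toEuclideanLin (∑ i, (Z i)ᴴ * (hA i).cfc f * Z i) x⟫_ℂ := by
    rw [toEuclideanLin_sum_apply, inner_sum, Complex.re_sum]
    exact Finset.sum_congr rfl fun i _ => by rw [inner_conjTranspose_mul]
  have hj := hf.map_sum_le h0 hsum (fun i _ => Set.mem_univ (s i))
  rw [hC, ← hD]
  refine le_trans hj (Finset.sum_le_sum fun i _ => ?_)
  by_cases hwi : w i = 0
  · have h00 := hy0 i hwi
    simp [hwi, h00]
  · have hyne : y i ≠ 0 := fun h => hwi (by rw [hw]; simp [h])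
    have hj1 := jensen_single (hA i) hf (y i) hyne
    simp only [hs, if_neg hwi]
    exact hj1


end AuxProof

open Module
open scoped InnerProductSpace

/-- **Theorem 2.2, eigenvalue form.** If `f` is convex, the `Aᵢ` are Hermitian and
`∑ᵢ Zᵢᴴ Zᵢ = I`, then `λ_{2j-1}(f(∑ᵢ Zᵢᴴ Aᵢ Zᵢ)) ≤ λ_j(∑ᵢ Zᵢᴴ f(Aᵢ) Zᵢ)`. -/
theorem eig_cfc_isometric_column_le
    {n m : ℕ} (f : ℝ → ℝ) (hf : ConvexOn ℝ Set.univ f)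
    (A : Fin m → Matrix (Fin n) (Fin n) ℂ) (hA : ∀ i, (A i).IsHermitian)
    (Z : Fin m → Matrix (Fin n) (Fin n) ℂ) (hZ : ∑ i, (Z i)ᴴ * Z i = 1)
    (j : ℕ) (hj : 1 ≤ j) (hjn : 2 * j - 1 ≤ n) :
    eigDesc (isHermitian_cfc (isHermitian_sum_conj Z hA) f) ⟨2 * j - 1 - 1, by omega⟩ ≤
      eigDesc (isHermitian_sum_conj Z fun i => isHermitian_cfc (hA i) f)
        ⟨j - 1, by omega⟩ := by
  classical
  have hjn' : j ≤ n := by omega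
  have hC : (∑ i, (Z i)ᴴ * A i * Z i).IsHermitian := isHermitian_sum_conj Z hA
  have hD : (∑ i, (Z i)ᴴ * (hA i).cfc f * Z i).IsHermitian :=
    isHermitian_sum_conj Z fun i => isHermitian_cfc (hA i) f
  have hjm : j - 1 < n := by omega
  set μ := eigDesc hD ⟨j - 1, hjm⟩ with hμ
  set σD := Tuple.sort hD.eigenvalues with hσD
  set IS : Finset (Fin n) := Finset.image σD (Finset.Iic ((⟨j - 1, hjm⟩ : Fin n).rev)) with hIS
  have hIScard : IS.card = n - j + 1 := by
    rw [hIS, Finset.card_image_of_injective _ σD.injective, Fin.card_Iic]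
    simp [Fin.rev]
    omega
  set S := Submodule.span ℂ (⇑hD.eigenvectorBasis '' ↑IS) with hS
  have hSrank : finrank ℂ S = n - j + 1 := by rw [hS, finrank_span_image, hIScard]
  have hDq : ∀ x ∈ S,
      Complex.re ⟪x, toEuclideanLin (∑ i, (Z i)ᴴ * (hA i).cfc f * Z i) x⟫_ℂ ≤ μ * ‖x‖ ^ 2 := by
    intro x hx
    have hb : ∀ i ∈ IS, (fun t => t) (hD.eigenvalues i) ≤ μ := by
      intro i hi
      obtain ⟨mm, hmm, rfl⟩ := Finset.mem_image.mp hi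
      exact Tuple.monotone_sort hD.eigenvalues (Finset.mem_Iic.mp hmm)
    have h := re_quad_cfc_le hD (fun t => t) IS hb hx
    rwa [cfc_id_eq] at h
  set K : Set ℝ := {t | f t ≤ μ} with hK
  have hKconv : Convex ℝ K := by
    have h := hf.convex_le μ
    simpa using h
  have hKmem : ∀ x ∈ S, x ≠ 0 →
      Complex.re ⟪x, toEuclideanLin (∑ i, (Z i)ᴴ * A i * Z i) x⟫_ℂ / ‖x‖ ^ 2 ∈ K := by
    intro x hxS hx0
    have hnorm : (0:ℝ) < ‖x‖ := norm_pos_iff.mpr hx0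
    set x' : EuclideanSpace ℂ (Fin n) := ((‖x‖⁻¹ : ℝ) : ℂ) • x with hx'
    have hx'S : x' ∈ S := S.smul_mem _ hxS
    have hx'n : ‖x'‖ = 1 := by
      rw [hx', norm_smul, Complex.norm_real, Real.norm_eq_abs,
        abs_of_nonneg (inv_nonneg.mpr hnorm.le)]
      exact inv_mul_cancel₀ hnorm.ne'
    have hjq := jensen_quad hf hA Z hZ x' hx'n
    have hDle := hDq x' hx'S
    rw [hx'n, one_pow, mul_one] at hDle
    have hscale : ∀ M : Matrix (Fin n) (Fin n) ℂ, Complex.re ⟪x', toEuclideanLin M x'⟫_ℂ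
        = Complex.re ⟪x, toEuclideanLin M x⟫_ℂ / ‖x‖ ^ 2 := by
      intro M
      rw [hx', _root_.map_smul, inner_smul_left, inner_smul_right, Complex.conj_ofReal,
        Complex.re_ofReal_mul, Complex.re_ofReal_mul]
      rw [div_eq_mul_inv, pow_two, mul_inv]
      ring
    rw [hK]
    simp only [Set.mem_setOf_eq]
    rw [← hscale]
    exact le_trans hjq hDle
  have hSne : ∃ x0, x0 ∈ S ∧ x0 ≠ 0 := by
    have hb : S ≠ ⊥ := by
      intro hb
      rw [hb, finrank_bot] at hSrank
      omega
    exact Submodule.exists_mem_ne_zero_of_ne_bot hb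
  obtain ⟨x0, hx0S, hx00⟩ := hSne
  set c := Complex.re ⟪x0, toEuclideanLin (∑ i, (Z i)ᴴ * A i * Z i) x0⟫_ℂ / ‖x0‖ ^ 2 with hc
  have hcK : c ∈ K := hKmem x0 hx0S hx00
  have hfc : f c ≤ μ := hcK
  set bad := Finset.univ.filter (fun i => μ < f (hC.eigenvalues i)) with hbad
  set high := bad.filter (fun i => c < hC.eigenvalues i) with hhigh
  set low := bad.filter (fun i => hC.eigenvalues i < c) with hlow
  have hbadsub : bad ⊆ high ∪ low := by
    intro i hi
    rcases lt_trichotomy (hC.eigenvalues i) c with h | h | h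
    · exact Finset.mem_union_right _ (Finset.mem_filter.mpr ⟨hi, h⟩)
    · exfalso
      have h2 : μ < f c := by
        rw [← h]
        exact (Finset.mem_filter.mp hi).2
      linarith
    · exact Finset.mem_union_left _ (Finset.mem_filter.mpr ⟨hi, h⟩)
  have hhighp : ∀ i ∈ high, ∀ t ∈ K, t < hC.eigenvalues i := by
    intro i hi t ht
    by_contra hle
    push_neg at hle
    have hci : c < hC.eigenvalues i := (Finset.mem_filter.mp hi).2
    have hvK : hC.eigenvalues i ∈ K := hKconv.ordConnected.out hcK ht ⟨hci.le, hle⟩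
    have h2 : μ < f (hC.eigenvalues i) :=
      (Finset.mem_filter.mp (Finset.mem_filter.mp hi).1).2
    have h3 : f (hC.eigenvalues i) ≤ μ := hvK
    linarith
  have hlowp : ∀ i ∈ low, ∀ t ∈ K, hC.eigenvalues i < t := by
    intro i hi t ht
    by_contra hle
    push_neg at hle
    have hci : hC.eigenvalues i < c := (Finset.mem_filter.mp hi).2
    have hvK : hC.eigenvalues i ∈ K := hKconv.ordConnected.out ht hcK ⟨hle, hci.le⟩
    have h2 : μ < f (hC.eigenvalues i) :=
      (Finset.mem_filter.mp (Finset.mem_filter.mp hi).1).2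
    have h3 : f (hC.eigenvalues i) ≤ μ := hvK
    linarith
  have hhighcard := card_le_of_high hC S K hKmem high hhighp
  have hlowcard := card_le_of_low hC S K hKmem low hlowp
  have hbadcard : bad.card ≤ 2 * j - 2 := by
    have h1 := Finset.card_le_card hbadsub
    have h2 := Finset.card_union_le high low
    rw [hSrank] at hhighcard hlowcard
    omega
  set good := Finset.univ.filter (fun i => f (hC.eigenvalues i) ≤ μ) with hgood
  have hgoodcard : n - (2 * j - 1 - 1) ≤ good.card := by
    have hcomp : good = badᶜ := by
      ext i
      simp [hgood, hbad, Finset.mem_compl, not_lt]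
    have hsplit : good.card = n - bad.card := by
      rw [hcomp, Finset.card_compl]
      simp
    have hbn : bad.card ≤ n := by
      have h9 := Finset.card_le_univ bad
      simpa using h9
    omega
  refine eigDesc_le_of_subspace (isHermitian_cfc hC f) (by omega)
    (Submodule.span ℂ (⇑hC.eigenvectorBasis '' ↑good)) ?_ ?_
  · rw [finrank_span_image]
    exact hgoodcard
  · intro x hx
    exact re_quad_cfc_le hC f good (fun i hi => (Finset.mem_filter.mp hi).2) hx
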